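/- Let K be a Cantor space and let α : K ≃ₜ K be a minimal homeomorphism. Then for every n ∈ ℕ and every x ∈ K there exists a clopen set U ⊆ K with x ∈ U such that the sets U, α(U), α²(U), …, αⁿ(U) are pairwise disjoint. -/

import Mathlib

/-- Let `K` be a Cantor space and `α : K ≃ₜ K` a minimal homeomorphism. Then for
every `n ∈ ℕ` and every `x ∈ K` there is a clopen set `U ∋ x` such that
`U, α(U), …, αⁿ(U)` are pairwise disjoint. -/
theorem exists_clopen_with_pairwise_disjoint_iterates
    {K : Type*} [TopologicalSpace K] [CompactSpace K] [TopologicalSpace.MetrizableSpace K]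
    [TotallyDisconnectedSpace K] [Nonempty K]
    (hperf : Perfect (Set.univ : Set K))
    (α : K ≃ₜ K)
    (hmin : ∀ x : K, Dense (Set.range fun n : ℤ => (α.toEquiv ^ n) x))
    (n : ℕ) (x : K) :
    ∃ U : Set K, IsClopen U ∧ x ∈ U ∧
      ∀ i j : ℕ, i ≤ n → j ≤ n → i ≠ j →
        Disjoint ((α.toEquiv ^ i) '' U) ((α.toEquiv ^ j) '' U) := by
  haveI : TotallySeparatedSpace K := loc_compact_t2_tot_disc_iff_tot_sep.mp inferInstance
  -- Step 1: no periodic points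
  have hnoper : ∀ (y : K) (k : ℤ), 0 < k → (α.toEquiv ^ k) y ≠ y := by
    intro y k hk hky
    -- every integer power fixes y after reduction mod k
    have hq : ∀ q : ℤ, (α.toEquiv ^ (k * q)) y = y := by
      intro q
      induction q using Int.induction_on with
      | zero => simp
      | succ q ih =>
        have : α.toEquiv ^ (k * (q + 1)) = α.toEquiv ^ k * α.toEquiv ^ (k * q) := by
          rw [← zpow_add]; ring_nf
        rw [this, Equiv.Perm.mul_apply, ih, hky]
      | pred q ih =>
        have : α.toEquiv ^ (k * (-q - 1)) * α.toEquiv ^ k = α.toEquiv ^ (k * (-q)) := by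
          rw [← zpow_add]; ring_nf
        have := congrArg (fun e : Equiv.Perm K => e y) this
        simp only [Equiv.Perm.mul_apply, hky] at this
        rw [this, ih]
    have hsub : (Set.range fun m : ℤ => (α.toEquiv ^ m) y) ⊆
        (fun r : ℤ => (α.toEquiv ^ r) y) '' (Set.Icc 0 k) := by
      rintro _ ⟨m, rfl⟩
      refine ⟨m % k, ⟨Int.emod_nonneg m hk.ne', (Int.emod_lt_of_pos m hk).le⟩, ?_⟩
      have : α.toEquiv ^ (m % k) * α.toEquiv ^ (k * (m / k)) = α.toEquiv ^ m := by
        rw [← zpow_add]; rw [add_comm, Int.mul_ediv_add_emod]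
      show (α.toEquiv ^ (m % k)) y = (α.toEquiv ^ m) y
      rw [← this, Equiv.Perm.mul_apply, hq]
    have hfin : (Set.range fun m : ℤ => (α.toEquiv ^ m) y).Finite :=
      ((Set.finite_Icc 0 k).image _).subset hsub
    have hKfin : (Set.univ : Set K).Finite := by
      have hcl := hfin.isClosed.closure_eq
      have := (hmin y).closure_eq
      rw [hcl] at this
      exact this ▸ hfin
    haveI : Finite K := Set.finite_univ_iff.mp hKfin
    have hacc := hperf.acc x (Set.mem_univ x)
    rw [accPt_iff_nhds] at hacc
    have hxopen : IsOpen ({x} : Set K) := by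
      rw [← isClosed_compl_iff]
      exact (Set.toFinite _).isClosed
    obtain ⟨z, ⟨hz1, _⟩, hz2⟩ := hacc {x} (hxopen.mem_nhds rfl)
    exact hz2 hz1
  -- Step 2: the points α^i x, i ≤ n, are pairwise distinct
  set y : ℕ → K := fun i => (α.toEquiv ^ (i : ℤ)) x with hy
  have hdist : ∀ i j : ℕ, i ≠ j → y i ≠ y j := by
    have key : ∀ i j : ℕ, i < j → y i ≠ y j := by
      intro i j hij h
      apply hnoper (y i) ((j : ℤ) - i) (by omega)
      have : α.toEquiv ^ ((j : ℤ) - i) * α.toEquiv ^ (i : ℤ) = α.toEquiv ^ (j : ℤ) := by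
        rw [← zpow_add]; ring_nf
      have := congrArg (fun e : Equiv.Perm K => e x) this
      simp only [Equiv.Perm.mul_apply] at this
      show (α.toEquiv ^ ((j : ℤ) - i)) ((α.toEquiv ^ (i : ℤ)) x) = (α.toEquiv ^ (i : ℤ)) x
      rw [this]
      exact h.symm
    intro i j hij
    rcases lt_or_gt_of_ne hij with h | h
    · exact key i j h
    · exact (key j i h).symm
  -- Step 3: separating clopen sets
  have hW : ∀ i j : ℕ, i ≠ j → ∃ W : Set K, IsClopen W ∧ y i ∈ W ∧ y j ∉ W := by
    intro i j hij
    obtain ⟨W, hW, h1, h2⟩ := exists_isClopen_of_totally_separated (hdist i j hij)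
    exact ⟨W, hW, h1, h2⟩
  choose W hWc hWi hWj using fun i j (h : i ≠ j) => hW i j h
  -- V i : pairwise disjoint clopen neighborhoods of y i
  set V : ℕ → Set K := fun i =>
    ⋂ j ∈ Finset.range (n + 1), ⋂ (h : j ≠ i), (W i j h.symm \ W j i h) with hV
  have hVc : ∀ i, IsClopen (V i) := by
    intro i
    apply isClopen_biInter_finset
    intro j _
    rcases eq_or_ne j i with rfl | h
    · haveI : IsEmpty (j ≠ j) := ⟨fun h => h rfl⟩
      rw [Set.iInter_of_empty]
      exact isClopen_univ
    · simpa [h] using ((hWc i j h.symm).diff (hWc j i h))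
  have hVm : ∀ i, y i ∈ V i := by
    intro i
    simp only [hV, Set.mem_iInter]
    intro j _ h
    exact ⟨hWi i j h.symm, hWj j i h⟩
  have hVd : ∀ i j, i ≤ n → j ≤ n → i ≠ j → Disjoint (V i) (V j) := by
    intro i j hi hj hij
    rw [Set.disjoint_left]
    intro z hzi hzj
    have h1 : z ∈ W i j hij := by
      have := Set.mem_iInter.mp hzi j
      have := Set.mem_iInter.mp (Set.mem_iInter.mp this (Finset.mem_range.mpr (by omega))) hij.symm
      exact this.1
    have h2 : z ∉ W i j hij := by
      have := Set.mem_iInter.mp hzj i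
      have := Set.mem_iInter.mp (Set.mem_iInter.mp this (Finset.mem_range.mpr (by omega))) hij
      exact this.2
    exact h2 h1
  -- Step 4: build U
  have hcont : ∀ i : ℕ, Continuous fun z : K => (α.toEquiv ^ i) z := by
    intro i
    induction i with
    | zero => simpa using continuous_id'
    | succ i ih =>
      have heq : (fun z : K => (α.toEquiv ^ (i + 1)) z)
          = (fun z : K => (α.toEquiv ^ i) z) ∘ α := by
        funext z
        show (α.toEquiv ^ (i + 1)) z = (α.toEquiv ^ i) (α z)
        rw [pow_succ, Equiv.Perm.mul_apply]
        rfl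
      rw [heq]
      exact ih.comp α.continuous
    -- note: pow_succ : a^(n+1) = a^n * a, and mul is comp so (a^n * a) z = a^n (a z)
  refine ⟨⋂ i ∈ Finset.range (n + 1), (fun z : K => (α.toEquiv ^ i) z) ⁻¹' V i, ?_, ?_, ?_⟩
  · apply isClopen_biInter_finset
    intro i _
    exact (hVc i).preimage (hcont i)
  · simp only [Set.mem_iInter]
    intro i _
    show (α.toEquiv ^ i) x ∈ V i
    have : (α.toEquiv ^ i) x = y i := by
      rw [hy]; simp only []
      rw [zpow_natCast]
    rw [this]; exact hVm i
  · intro i j hi hj hij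
    have himg : ∀ k : ℕ, k ≤ n →
        (α.toEquiv ^ k) '' (⋂ i ∈ Finset.range (n + 1),
          (fun z : K => (α.toEquiv ^ i) z) ⁻¹' V i) ⊆ V k := by
      intro k hk
      rintro _ ⟨z, hz, rfl⟩
      have := Set.mem_iInter.mp hz k
      exact Set.mem_iInter.mp this (Finset.mem_range.mpr (by omega))
    exact Set.disjoint_of_subset (himg i hi) (himg j hj) (hVd i j hi hj hij)
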